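/- Let x₀, y₀ ∈ ℝ and let u, p : [x₀,∞) × [y₀,∞) → [0,∞) be continuous. Let k ≥ 0 be a constant. If u(x,y) ≤ k + ∫_{x₀}^{x} ∫_{x₀}^{s} ∫_{y₀}^{y} p(η,τ) u(η,τ) dτ dη ds for all x ≥ x₀ and y ≥ y₀, then u(x,y) ≤ k · exp( ∫_{x₀}^{x} ∫_{x₀}^{s} ∫_{y₀}^{y} p(η,τ) dτ dη ds ) for all x ≥ x₀ and y ≥ y₀. -/

import Mathlib

open MeasureTheory Set intervalIntegral

lemma my_int_le_ext {f : ℝ → ℝ} (hf : Continuous f) (h0 : ∀ t, 0 ≤ f t) {a b c : ℝ}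
    (hbc : b ≤ c) : (∫ t in a..b, f t) ≤ ∫ t in a..c, f t := by
  rw [← intervalIntegral.integral_add_adjacent_intervals (hf.intervalIntegrable a b)
    (hf.intervalIntegrable b c)]
  have h2 : 0 ≤ ∫ t in b..c, f t := intervalIntegral.integral_nonneg hbc (fun t _ => h0 t)
  linarith

lemma my_gronwall {a k : ℝ} {f q : ℝ → ℝ}
    (hf : Continuous f) (hq : Continuous q)
    (hq0 : ∀ x, a ≤ x → 0 ≤ q x)
    (h : ∀ x, a ≤ x → f x ≤ k + ∫ s in a..x, q s * f s) :
    ∀ x, a ≤ x → f x ≤ k * Real.exp (∫ s in a..x, q s) := by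
  intro x hx
  set H : ℝ → ℝ := fun t => k + ∫ s in a..t, q s * f s with hHdef
  set R : ℝ → ℝ := fun t => ∫ s in a..t, q s with hRdef
  set F : ℝ → ℝ := fun t => H t * Real.exp (-R t) with hFdef
  have hqf : Continuous fun s => q s * f s := hq.mul hf
  have hHd : ∀ t, HasDerivAt H (q t * f t) t := fun t =>
    ((hqf.integral_hasStrictDerivAt a t).hasDerivAt).const_add k
  have hRd : ∀ t, HasDerivAt R (q t) t := fun t =>
    (hq.integral_hasStrictDerivAt a t).hasDerivAt
  have hFd : ∀ t, HasDerivAt F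
      ((q t * f t) * Real.exp (-R t) + H t * (Real.exp (-R t) * (-q t))) t := by
    intro t
    exact (hHd t).mul ((hRd t).neg.exp)
  have hFcont : Continuous F := by fun_prop
  have hanti : AntitoneOn F (Set.Ici a) := by
    apply antitoneOn_of_deriv_nonpos (convex_Ici a) hFcont.continuousOn
    · intro t ht
      exact (hFd t).differentiableAt.differentiableWithinAt
    · intro t ht
      rw [interior_Ici] at ht
      have ht' : a ≤ t := le_of_lt ht
      rw [(hFd t).deriv]
      have hfH : f t ≤ H t := h t ht'
      have e := Real.exp_pos (-R t)
      nlinarith [mul_nonneg (hq0 t ht') (sub_nonneg.2 hfH)]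
  have hFa : F x ≤ F a := hanti self_mem_Ici hx hx
  have hFa' : F a = k := by simp [hFdef, hHdef, hRdef]
  rw [hFa'] at hFa
  have h2 : H x ≤ k * Real.exp (R x) := by
    calc H x = H x * Real.exp (-R x) * Real.exp (R x) := by
          rw [mul_assoc, ← Real.exp_add]; simp
      _ ≤ k * Real.exp (R x) := mul_le_mul_of_nonneg_right hFa (Real.exp_pos _).le
  exact le_trans (h x hx) h2

lemma my_key (x₀ y₀ : ℝ) (u p : ℝ → ℝ → ℝ) (k : ℝ)
    (hu : Continuous fun z : ℝ × ℝ => u z.1 z.2)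
    (hp : Continuous fun z : ℝ × ℝ => p z.1 z.2)
    (hu0 : ∀ x y, 0 ≤ u x y) (hp0 : ∀ x y, 0 ≤ p x y) (hk : 0 ≤ k)
    (hineq : ∀ x y, x₀ ≤ x → y₀ ≤ y →
      u x y ≤ k + ∫ s in x₀..x, ∫ η in x₀..s, ∫ τ in y₀..y, p η τ * u η τ) :
    ∀ x y, x₀ ≤ x → y₀ ≤ y →
      u x y ≤ k * Real.exp (∫ s in x₀..x, ∫ η in x₀..s, ∫ τ in y₀..y, p η τ) := by
  intro x y hx hy
  have hpu : Continuous fun z : ℝ × ℝ => p z.1 z.2 * u z.1 z.2 := hp.mul hu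
  set g : ℝ → ℝ := fun η => ∫ τ in y₀..y, p η τ * u η τ with hgdef
  set P : ℝ → ℝ := fun η => ∫ τ in y₀..y, p η τ with hPdef
  have hpu' : Continuous (Function.uncurry fun a b => p a b * u a b) := hpu
  have hp' : Continuous (Function.uncurry fun a b => p a b) := hp
  have hg : Continuous g :=
    intervalIntegral.continuous_parametric_intervalIntegral_of_continuous' hpu' y₀ y
  have hP : Continuous P :=
    intervalIntegral.continuous_parametric_intervalIntegral_of_continuous' hp' y₀ y
  have hg0 : ∀ η, 0 ≤ g η := fun η =>
    intervalIntegral.integral_nonneg hy (fun τ _ => mul_nonneg (hp0 _ _) (hu0 _ _))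
  have hP0 : ∀ η, 0 ≤ P η := fun η =>
    intervalIntegral.integral_nonneg hy (fun τ _ => hp0 _ _)
  set G : ℝ → ℝ := fun s => ∫ η in x₀..s, g η with hGdef
  set Q : ℝ → ℝ := fun s => ∫ η in x₀..s, P η with hQdef
  have hG : Continuous G :=
    intervalIntegral.continuous_primitive (fun _ _ => hg.intervalIntegrable _ _) x₀
  have hQ : Continuous Q :=
    intervalIntegral.continuous_primitive (fun _ _ => hP.intervalIntegrable _ _) x₀
  have hG0 : ∀ s, x₀ ≤ s → 0 ≤ G s := fun s hs =>
    intervalIntegral.integral_nonneg hs (fun η _ => hg0 η)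
  have hQ0 : ∀ s, x₀ ≤ s → 0 ≤ Q s := fun s hs =>
    intervalIntegral.integral_nonneg hs (fun η _ => hP0 η)
  set v : ℝ → ℝ := fun t => k + ∫ s in x₀..t, G s with hvdef
  have hv : Continuous v := continuous_const.add
    (intervalIntegral.continuous_primitive (fun _ _ => hG.intervalIntegrable _ _) x₀)
  have hmono : ∀ ⦃s t : ℝ⦄, x₀ ≤ s → s ≤ t → v s ≤ v t := by
    intro s t hs hst
    have hadd : (∫ r in x₀..s, G r) + ∫ r in s..t, G r = ∫ r in x₀..t, G r :=
      intervalIntegral.integral_add_adjacent_intervals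
        (hG.intervalIntegrable x₀ s) (hG.intervalIntegrable s t)
    have h2 : 0 ≤ ∫ r in s..t, G r :=
      intervalIntegral.integral_nonneg hst (fun r hr => hG0 r (hs.trans hr.1))
    simp only [hvdef]
    linarith
  have hA : ∀ η τ, x₀ ≤ η → y₀ ≤ τ → τ ≤ y → u η τ ≤ v η := by
    intro η τ hη hτ hτy
    refine (hineq η τ hη hτ).trans ?_
    have inner_le : ∀ η' : ℝ, (∫ τ' in y₀..τ, p η' τ' * u η' τ') ≤ g η' := by
      intro η'
      have hc : Continuous fun τ' => p η' τ' * u η' τ' :=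
        hpu.comp (continuous_const.prodMk continuous_id)
      exact my_int_le_ext hc (fun τ' => mul_nonneg (hp0 _ _) (hu0 _ _)) hτy
    have hcτ : Continuous fun η' => ∫ τ' in y₀..τ, p η' τ' * u η' τ' :=
      intervalIntegral.continuous_parametric_intervalIntegral_of_continuous' hpu' y₀ τ
    have mid_le : ∀ s, x₀ ≤ s →
        (∫ η' in x₀..s, ∫ τ' in y₀..τ, p η' τ' * u η' τ') ≤ G s := by
      intro s hs
      exact intervalIntegral.integral_mono_on hs (hcτ.intervalIntegrable _ _)
        (hg.intervalIntegrable _ _) (fun η' _ => inner_le η')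
    have hout : (∫ s in x₀..η, ∫ η' in x₀..s, ∫ τ' in y₀..τ, p η' τ' * u η' τ')
        ≤ ∫ s in x₀..η, G s := by
      have hcmid : Continuous fun s => ∫ η' in x₀..s, ∫ τ' in y₀..τ, p η' τ' * u η' τ' :=
        intervalIntegral.continuous_primitive (fun _ _ => hcτ.intervalIntegrable _ _) x₀
      exact intervalIntegral.integral_mono_on hη (hcmid.intervalIntegrable _ _)
        (hG.intervalIntegrable _ _) (fun s hs => mid_le s hs.1)
    simp only [hvdef]
    linarith
  have hB : ∀ η, x₀ ≤ η → g η ≤ P η * v η := by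
    intro η hη
    have hc1 : Continuous fun τ' => p η τ' * u η τ' :=
      hpu.comp (continuous_const.prodMk continuous_id)
    have hc2 : Continuous fun τ' => p η τ' :=
      hp.comp (continuous_const.prodMk continuous_id)
    have step : (∫ τ' in y₀..y, p η τ' * u η τ') ≤ ∫ τ' in y₀..y, p η τ' * v η := by
      apply intervalIntegral.integral_mono_on hy (hc1.intervalIntegrable _ _)
        ((hc2.mul continuous_const).intervalIntegrable _ _)
      intro τ' hτ'
      exact mul_le_mul_of_nonneg_left (hA η τ' hη hτ'.1 hτ'.2) (hp0 _ _)
    calc g η ≤ ∫ τ' in y₀..y, p η τ' * v η := step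
      _ = P η * v η := by rw [intervalIntegral.integral_mul_const]
  have hGle : ∀ s, x₀ ≤ s → G s ≤ Q s * v s := by
    intro s hs
    have h1 : G s ≤ ∫ η in x₀..s, P η * v s := by
      apply intervalIntegral.integral_mono_on hs (hg.intervalIntegrable _ _)
        ((hP.mul continuous_const).intervalIntegrable _ _)
      intro η hη
      calc g η ≤ P η * v η := hB η hη.1
        _ ≤ P η * v s := mul_le_mul_of_nonneg_left (hmono hη.1 hη.2) (hP0 η)
    rwa [intervalIntegral.integral_mul_const] at h1
  have hC : ∀ t, x₀ ≤ t → v t ≤ k + ∫ s in x₀..t, Q s * v s := by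
    intro t ht
    have h1 : (∫ s in x₀..t, G s) ≤ ∫ s in x₀..t, Q s * v s :=
      intervalIntegral.integral_mono_on ht (hG.intervalIntegrable _ _)
        ((hQ.mul hv).intervalIntegrable _ _) (fun s hs => hGle s hs.1)
    simp only [hvdef]
    linarith
  have final := my_gronwall hv hQ hQ0 hC x hx
  exact (hA x y hx hy le_rfl).trans final

lemma my_cong (x₀ y₀ : ℝ) (f f' : ℝ → ℝ → ℝ)
    (hff : ∀ a b, x₀ ≤ a → y₀ ≤ b → f a b = f' a b) :
    ∀ x y, x₀ ≤ x → y₀ ≤ y →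
      (∫ s in x₀..x, ∫ η in x₀..s, ∫ τ in y₀..y, f η τ)
        = ∫ s in x₀..x, ∫ η in x₀..s, ∫ τ in y₀..y, f' η τ := by
  intro x y hx hy
  apply intervalIntegral.integral_congr
  intro s hs
  rw [Set.uIcc_of_le hx] at hs
  apply intervalIntegral.integral_congr
  intro η hη
  rw [Set.uIcc_of_le hs.1] at hη
  apply intervalIntegral.integral_congr
  intro τ hτ
  rw [Set.uIcc_of_le hy] at hτ
  exact hff η τ hη.1 hτ.1

theorem stmt_0 (x₀ y₀ : ℝ) (u p : ℝ → ℝ → ℝ) (k : ℝ)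
    (hu_cont : ContinuousOn (fun z : ℝ × ℝ => u z.1 z.2) (Set.Ici x₀ ×ˢ Set.Ici y₀))
    (hp_cont : ContinuousOn (fun z : ℝ × ℝ => p z.1 z.2) (Set.Ici x₀ ×ˢ Set.Ici y₀))
    (hu_nonneg : ∀ x y, x₀ ≤ x → y₀ ≤ y → 0 ≤ u x y)
    (hp_nonneg : ∀ x y, x₀ ≤ x → y₀ ≤ y → 0 ≤ p x y)
    (hk : 0 ≤ k)
    (hineq : ∀ x y, x₀ ≤ x → y₀ ≤ y →
      u x y ≤ k + ∫ s in x₀..x, ∫ η in x₀..s, ∫ τ in y₀..y, p η τ * u η τ) :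
    ∀ x y, x₀ ≤ x → y₀ ≤ y →
      u x y ≤ k * Real.exp (∫ s in x₀..x, ∫ η in x₀..s, ∫ τ in y₀..y, p η τ) := by
  intro x y hx hy
  set u' : ℝ → ℝ → ℝ := fun a b => u (max a x₀) (max b y₀) with hu'def
  set p' : ℝ → ℝ → ℝ := fun a b => p (max a x₀) (max b y₀) with hp'def
  have hm : Continuous fun z : ℝ × ℝ => ((max z.1 x₀, max z.2 y₀) : ℝ × ℝ) :=
    (continuous_fst.max continuous_const).prodMk (continuous_snd.max continuous_const)
  have hmem : ∀ z : ℝ × ℝ, ((max z.1 x₀, max z.2 y₀) : ℝ × ℝ) ∈ Set.Ici x₀ ×ˢ Set.Ici y₀ :=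
    fun z => ⟨le_max_right z.1 x₀, le_max_right z.2 y₀⟩
  have hu' : Continuous fun z : ℝ × ℝ => u' z.1 z.2 := hu_cont.comp_continuous hm hmem
  have hp' : Continuous fun z : ℝ × ℝ => p' z.1 z.2 := hp_cont.comp_continuous hm hmem
  have hu'eq : ∀ a b, x₀ ≤ a → y₀ ≤ b → u' a b = u a b := by
    intro a b ha hb; simp [hu'def, max_eq_left ha, max_eq_left hb]
  have hp'eq : ∀ a b, x₀ ≤ a → y₀ ≤ b → p' a b = p a b := by
    intro a b ha hb; simp [hp'def, max_eq_left ha, max_eq_left hb]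
  have heq : ∀ a b, x₀ ≤ a → y₀ ≤ b → p' a b * u' a b = p a b * u a b := by
    intro a b ha hb; rw [hu'eq a b ha hb, hp'eq a b ha hb]
  have hineq' : ∀ a b, x₀ ≤ a → y₀ ≤ b →
      u' a b ≤ k + ∫ s in x₀..a, ∫ η in x₀..s, ∫ τ in y₀..b, p' η τ * u' η τ := by
    intro a b ha hb
    rw [my_cong x₀ y₀ _ _ heq a b ha hb, hu'eq a b ha hb]
    exact hineq a b ha hb
  have hmain := my_key x₀ y₀ u' p' k hu' hp'
    (fun a b => hu_nonneg _ _ (le_max_right _ _) (le_max_right _ _))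
    (fun a b => hp_nonneg _ _ (le_max_right _ _) (le_max_right _ _)) hk hineq' x y hx hy
  rwa [hu'eq x y hx hy, my_cong x₀ y₀ _ _ hp'eq x y hx hy] at hmain
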